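/- Correctness of the parallel Rauch–Tung–Striebel smoother: under the linear-Gaussian model assumptions, suppose additionally that P_{k+1|k} = F_k P_{k|k} F_kᵀ + Q_k is invertible for k = 1, …, T−1, and define the smoothing elements a_k = (E_k, g_k, L_k) by E_k = P_{k|k} F_kᵀ (F_k P_{k|k} F_kᵀ + Q_k)⁻¹, g_k = x̄_{k|k} − E_k (F_k x̄_{k|k} + u_k), L_k = P_{k|k} − E_k F_k P_{k|k} for k < T, and a_T = (0, x̄_{T|T}, P_{T|T}). Then for every k = 1, …, T, the suffix product a_k ⊗ a_{k+1} ⊗ ⋯ ⊗ a_T under the smoothing operator has g-component equal to the RTS smoother mean x̄_{k|T} and L-component equal to the RTS smoother covariance P_{k|T}. -/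

import Mathlib

open Matrix

/-- A smoothing element over `ℝⁿ`. -/
structure SmoothingElem (n : ℕ) where
  E : Matrix (Fin n) (Fin n) ℝ
  g : Fin n → ℝ
  L : Matrix (Fin n) (Fin n) ℝ

/-- The smoothing operator
`(E_i, g_i, L_i) ⊗ (E_j, g_j, L_j) = (E_i E_j, E_i g_j + g_i, E_i L_j E_iᵀ + L_i)`. -/
def smoothOp {n : ℕ} (x y : SmoothingElem n) : SmoothingElem n where
  E := x.E * y.E
  g := x.E *ᵥ y.g + x.g
  L := x.E * y.L * x.Eᵀ + x.L

/-- The data of a linear-Gaussian state-space model. -/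
structure LGModel (n m : ℕ) where
  T : ℕ
  F : ℕ → Matrix (Fin n) (Fin n) ℝ
  H : ℕ → Matrix (Fin m) (Fin n) ℝ
  u : ℕ → Fin n → ℝ
  d : ℕ → Fin m → ℝ
  Q : ℕ → Matrix (Fin n) (Fin n) ℝ
  R : ℕ → Matrix (Fin m) (Fin m) ℝ
  y : ℕ → Fin m → ℝ
  x0 : Fin n → ℝ
  P0 : Matrix (Fin n) (Fin n) ℝ

variable {n m : ℕ}

/-- The Kalman filter recursion: `kf M k = (x̄_{k|k}, P_{k|k})`. -/
noncomputable def LGModel.kf (M : LGModel n m) : ℕ → (Fin n → ℝ) × Matrix (Fin n) (Fin n) ℝ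
  | 0 => (M.x0, M.P0)
  | k + 1 =>
    let prev := LGModel.kf M k
    let xp := M.F k *ᵥ prev.1 + M.u k
    let Pp := M.F k * prev.2 * (M.F k)ᵀ + M.Q k
    let S := M.H (k + 1) * Pp * (M.H (k + 1))ᵀ + M.R (k + 1)
    let K := Pp * (M.H (k + 1))ᵀ * S⁻¹
    (xp + K *ᵥ (M.y (k + 1) - M.H (k + 1) *ᵥ xp - M.d (k + 1)),
     Pp - K * M.H (k + 1) * Pp)

/-- The Rauch–Tung–Striebel backward recursion: `rts M j = (x̄_{T-j|T}, P_{T-j|T})`. -/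
noncomputable def LGModel.rts (M : LGModel n m) : ℕ → (Fin n → ℝ) × Matrix (Fin n) (Fin n) ℝ
  | 0 => M.kf M.T
  | j + 1 =>
    let k := M.T - j - 1
    let P := (M.kf k).2
    let Pp := M.F k * P * (M.F k)ᵀ + M.Q k
    let G := P * (M.F k)ᵀ * Pp⁻¹
    ((M.kf k).1 + G *ᵥ ((LGModel.rts M j).1 - (M.F k *ᵥ (M.kf k).1 + M.u k)),
     P + G * ((LGModel.rts M j).2 - Pp) * Gᵀ)

/-- The smoothing element `a_k = (E_k, g_k, L_k)` of the parallel RTS smoother. -/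
noncomputable def LGModel.selem (M : LGModel n m) (k : ℕ) : SmoothingElem n :=
  if k = M.T then
    { E := 0, g := (M.kf M.T).1, L := (M.kf M.T).2 }
  else
    let P := (M.kf k).2
    let E := P * (M.F k)ᵀ * (M.F k * P * (M.F k)ᵀ + M.Q k)⁻¹
    { E := E
      g := (M.kf k).1 - E *ᵥ (M.F k *ᵥ (M.kf k).1 + M.u k)
      L := P - E * M.F k * P }

/-- The suffix products of the smoothing elements under the smoothing operator:
`ssuff M j = a_{T-j} ⊗ a_{T-j+1} ⊗ ⋯ ⊗ a_T`. -/
noncomputable def LGModel.ssuff (M : LGModel n m) : ℕ → SmoothingElem n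
  | 0 => M.selem M.T
  | j + 1 => smoothOp (M.selem (M.T - j - 1)) (LGModel.ssuff M j)

/-- Correctness of the parallel Rauch–Tung–Striebel smoother: under the linear-Gaussian
model assumptions, if additionally every predicted covariance
`P_{k+1|k} = F_k P_{k|k} F_kᵀ + Q_k` (for `k = 1, …, T-1`) is invertible, then for every
`k = 1, …, T` the suffix product `a_k ⊗ a_{k+1} ⊗ ⋯ ⊗ a_T` of the smoothing elements
has `g`-component equal to the RTS smoother mean `x̄_{k|T}` and `L`-component equal to
the RTS smoother covariance `P_{k|T}`. -/
theorem parallel_rts_smoother_correct (M : LGModel n m) (hT : 1 ≤ M.T)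
    (hQ : ∀ k, k < M.T → (M.Q k).PosSemidef)
    (hR : ∀ k, 1 ≤ k → k ≤ M.T → (M.R k).PosDef)
    (hP0 : M.P0.PosSemidef)
    (hPp : ∀ k, 1 ≤ k → k ≤ M.T - 1 → IsUnit (M.F k * (M.kf k).2 * (M.F k)ᵀ + M.Q k)) :
    ∀ k, 1 ≤ k → k ≤ M.T →
      (M.ssuff (M.T - k)).g = (M.rts (M.T - k)).1 ∧
      (M.ssuff (M.T - k)).L = (M.rts (M.T - k)).2 := by
  -- Symmetry of the filter covariances
  have hPsymm : ∀ k, k ≤ M.T → ((M.kf k).2)ᵀ = (M.kf k).2 := by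
    intro k
    induction k with
    | zero => intro _; simpa [LGModel.kf] using hP0.isHermitian.eq
    | succ k ih =>
      intro hk
      have hP : ((M.kf k).2)ᵀ = (M.kf k).2 := ih (Nat.le_of_succ_le hk)
      have hQs : (M.Q k)ᵀ = M.Q k := by
        simpa using (hQ k (by omega)).isHermitian.eq
      have hRs : (M.R (k + 1))ᵀ = M.R (k + 1) := by
        simpa using (hR (k + 1) (by omega) hk).posSemidef.isHermitian.eq
      show (LGModel.kf M (k+1)).2ᵀ = (LGModel.kf M (k+1)).2
      simp only [LGModel.kf]
      set P := (M.kf k).2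
      set Pp := M.F k * P * (M.F k)ᵀ + M.Q k with hPpd
      set S := M.H (k + 1) * Pp * (M.H (k + 1))ᵀ + M.R (k + 1) with hSd
      have hPps : Ppᵀ = Pp := by
        rw [hPpd]
        simp [Matrix.transpose_add, Matrix.transpose_mul, hP, hQs, Matrix.mul_assoc]
      have hSs : Sᵀ = S := by
        rw [hSd]
        simp [Matrix.transpose_add, Matrix.transpose_mul, hPps, hRs, Matrix.mul_assoc]
      have hSinv : (S⁻¹)ᵀ = S⁻¹ := by
        rw [Matrix.transpose_nonsing_inv, hSs]
      simp [Matrix.transpose_sub, Matrix.transpose_mul, hPps, hSinv, Matrix.mul_assoc]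
  -- main induction on the suffix length
  have key : ∀ j, j ≤ M.T - 1 →
      (M.ssuff j).g = (M.rts j).1 ∧ (M.ssuff j).L = (M.rts j).2 := by
    intro j
    induction j with
    | zero =>
      intro _
      constructor <;> simp [LGModel.ssuff, LGModel.rts, LGModel.selem]
    | succ j ih =>
      intro hj
      obtain ⟨hg, hL⟩ := ih (by omega)
      have hk1 : 1 ≤ M.T - j - 1 := by omega
      have hkT : M.T - j - 1 ≤ M.T - 1 := by omega
      have hkne : ¬ (M.T - j - 1 = M.T) := by omega
      set k := M.T - j - 1 with hkd
      have hU := hPp k hk1 hkT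
      have hdet : IsUnit (M.F k * (M.kf k).2 * (M.F k)ᵀ + M.Q k).det :=
        (Matrix.isUnit_iff_isUnit_det _).mp hU
      have hP : ((M.kf k).2)ᵀ = (M.kf k).2 := hPsymm k (by omega)
      have hQs : (M.Q k)ᵀ = M.Q k := by
        simpa using (hQ k (by omega)).isHermitian.eq
      set P := (M.kf k).2
      set Pp := M.F k * P * (M.F k)ᵀ + M.Q k with hPpd
      have hPps : Ppᵀ = Pp := by
        rw [hPpd]
        simp [Matrix.transpose_add, Matrix.transpose_mul, hP, hQs, Matrix.mul_assoc]
      have hinv : Pp⁻¹ * Pp = 1 := Matrix.nonsing_inv_mul _ hdet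
      have hinvs : (Pp⁻¹)ᵀ = Pp⁻¹ := by
        rw [Matrix.transpose_nonsing_inv, hPps]
      set E := P * (M.F k)ᵀ * Pp⁻¹ with hEd
      constructor
      · show (smoothOp (M.selem k) (M.ssuff j)).g = _
        simp only [smoothOp, LGModel.selem, if_neg hkne, LGModel.rts]
        rw [hg, Matrix.mulVec_sub]
        abel_nf
        rw [← hkd]
        abel
      · show (smoothOp (M.selem k) (M.ssuff j)).L = _
        simp only [smoothOp, LGModel.selem, if_neg hkne, LGModel.rts]
        rw [hL]
        have hEPp : E * Pp * Eᵀ = E * M.F k * P := by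
          rw [hEd]
          calc P * (M.F k)ᵀ * Pp⁻¹ * Pp * (P * (M.F k)ᵀ * Pp⁻¹)ᵀ
              = P * (M.F k)ᵀ * (Pp⁻¹ * Pp) * ((Pp⁻¹)ᵀ * (M.F k * Pᵀ)) := by
                simp [Matrix.transpose_mul, Matrix.mul_assoc]
            _ = P * (M.F k)ᵀ * Pp⁻¹ * (M.F k * P) := by
                rw [hinv, hinvs, hP]; simp [Matrix.mul_assoc]
            _ = P * (M.F k)ᵀ * Pp⁻¹ * M.F k * P := by simp [Matrix.mul_assoc]
        have expand : E * ((M.rts j).2 - Pp) * Eᵀ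
            = E * (M.rts j).2 * Eᵀ - E * Pp * Eᵀ := by
          rw [Matrix.mul_sub, Matrix.sub_mul]
        rw [expand, hEPp]
        abel
  intro k hk1 hkT
  exact key (M.T - k) (by omega)
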